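/- If an open set Ω ⊆ ℝⁿ satisfies the ε-ball condition, then the map assigning to each boundary point x its direction vector d_x is (1/ε)-Lipschitz: for all x, y ∈ ∂Ω, ‖d_x − d_y‖ ≤ (1/ε)‖x − y‖. In particular, d_x is uniquely determined by x. -/
import Mathlib


open Metric
open scoped RealInnerProductSpace

/-- If an open set `Ω ⊆ ℝⁿ` satisfies the ε-ball condition, then the direction vectors at
boundary points satisfy `‖d_x − d_y‖ ≤ (1/ε)‖x − y‖`; in particular (`x = y`) the direction
vector at a boundary point is unique. -/
theorem stmt_0 {n : ℕ} (hn : 2 ≤ n) (ε : ℝ) (hε : 0 < ε)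
    (Ω : Set (EuclideanSpace ℝ (Fin n))) (hΩ : IsOpen Ω)
    (x y : EuclideanSpace ℝ (Fin n)) (hx : x ∈ frontier Ω) (hy : y ∈ frontier Ω)
    (dx dy : EuclideanSpace ℝ (Fin n)) (hdx : ‖dx‖ = 1) (hdy : ‖dy‖ = 1)
    (hx1 : ball (x - ε • dx) ε ⊆ Ω) (hx2 : ball (x + ε • dx) ε ⊆ (closure Ω)ᶜ)
    (hy1 : ball (y - ε • dy) ε ⊆ Ω) (hy2 : ball (y + ε • dy) ε ⊆ (closure Ω)ᶜ) :
    ‖dx - dy‖ ≤ (1 / ε) * ‖x - y‖ := by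
  have key : ∀ c1 c2 : EuclideanSpace ℝ (Fin n), ball c1 ε ⊆ Ω → ball c2 ε ⊆ (closure Ω)ᶜ →
      2 * ε ≤ ‖c1 - c2‖ := by
    intro c1 c2 h1 h2
    by_contra h
    push_neg at h
    rw [← dist_eq_norm] at h
    have hm1 : midpoint ℝ c1 c2 ∈ ball c1 ε := by
      rw [mem_ball, dist_midpoint_left, Real.norm_ofNat]
      linarith
    have hm2 : midpoint ℝ c1 c2 ∈ ball c2 ε := by
      rw [mem_ball, dist_midpoint_right, Real.norm_ofNat]
      linarith
    exact h2 hm2 (subset_closure (h1 hm1))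
  have h1 : 2 * ε ≤ ‖(x - y) - ε • (dx + dy)‖ := by
    have := key (x - ε • dx) (y + ε • dy) hx1 hy2
    have heq : (x - ε • dx) - (y + ε • dy) = (x - y) - ε • (dx + dy) := by module
    rwa [heq] at this
  have h2 : 2 * ε ≤ ‖(x - y) + ε • (dx + dy)‖ := by
    have := key (y - ε • dy) (x + ε • dx) hy1 hx2
    have heq : (y - ε • dy) - (x + ε • dx) = -((x - y) + ε • (dx + dy)) := by module
    rwa [heq, norm_neg] at this
  set a := x - y with ha
  set s := dx + dy with hs
  have hpar : ‖a - ε • s‖ ^ 2 + ‖a + ε • s‖ ^ 2 = 2 * ‖a‖ ^ 2 + 2 * ‖ε • s‖ ^ 2 := by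
    rw [norm_sub_sq_real, norm_add_sq_real]; ring
  have hpar2 : ‖s‖ ^ 2 + ‖dx - dy‖ ^ 2 = 2 * ‖dx‖ ^ 2 + 2 * ‖dy‖ ^ 2 := by
    rw [hs, norm_sub_sq_real, norm_add_sq_real]; ring
  have hes : ‖ε • s‖ = ε * ‖s‖ := by
    rw [norm_smul, Real.norm_eq_abs, abs_of_pos hε]
  rw [hdx, hdy] at hpar2
  have hA : (2 * ε) ^ 2 ≤ ‖a - ε • s‖ ^ 2 := pow_le_pow_left₀ (by positivity) h1 2
  have hB : (2 * ε) ^ 2 ≤ ‖a + ε • s‖ ^ 2 := pow_le_pow_left₀ (by positivity) h2 2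
  have hes2 : ‖ε • s‖ ^ 2 = ε ^ 2 * ‖s‖ ^ 2 := by rw [hes]; ring
  have hsq : (ε * ‖dx - dy‖) ^ 2 ≤ ‖a‖ ^ 2 := by nlinarith
  have hfin : ε * ‖dx - dy‖ ≤ ‖a‖ := by
    have h0 : 0 ≤ ε * ‖dx - dy‖ := mul_nonneg hε.le (norm_nonneg _)
    nlinarith [norm_nonneg a]
  rw [div_mul_eq_mul_div, one_mul, le_div_iff₀ hε]
  linarith
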